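/- Let C be an n×n matrix with all entries in {0,1}, with row-sums r_1 ≥ r_2 ≥ ... ≥ r_n > 0, and let t satisfy n − r_n + 1 ≤ t ≤ n. Then ρ(C) ≥ (r_t + sqrt(r_t^2 − 4(r_n − 1)(r_t − r_n)))/2. In particular, this lower bound is at least r_n, with equality in the bound's comparison to r_n iff r_t = r_n. -/

import Mathlib

/-- Spectral radius of a real square matrix: maximum modulus of its complex eigenvalues. -/
noncomputable def specRad {n : ℕ} (A : Matrix (Fin n) (Fin n) ℝ) : ℝ :=
  ((A.map (fun x => (x : ℂ))).charpoly.roots.map (fun z => ‖z‖)).foldr max 0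

open Matrix Polynomial Filter
open scoped NNReal ENNReal

attribute [local instance] Matrix.linftyOpNormedRing Matrix.linftyOpNormedAlgebra

private lemma foldr_max_nonneg' (s : Multiset ℝ) : 0 ≤ s.foldr max 0 := by
  induction s using Multiset.induction_on with
  | empty => simp
  | cons a s ih => rw [Multiset.foldr_cons]; exact le_trans ih (le_max_right _ _)

private lemma le_foldr_max' {s : Multiset ℝ} {x : ℝ} (hx : x ∈ s) : x ≤ s.foldr max 0 := by
  induction s using Multiset.induction_on with
  | empty => simp at hx
  | cons a s ih =>
    rw [Multiset.foldr_cons]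
    rcases Multiset.mem_cons.mp hx with h | h
    · exact h ▸ le_max_left _ _
    · exact le_trans (ih h) (le_max_right _ _)

private lemma eval_charpoly' {n : ℕ} (M : Matrix (Fin n) (Fin n) ℂ) (μ : ℂ) :
    M.charpoly.eval μ = (Matrix.scalar (Fin n) μ - M).det := by
  rw [Matrix.charpoly, eval_det, matPolyEquiv_charmatrix]
  simp

private lemma root_of_mem_spectrum' {n : ℕ} (M : Matrix (Fin n) (Fin n) ℂ) {μ : ℂ}
    (hμ : μ ∈ spectrum ℂ M) : μ ∈ M.charpoly.roots := by
  rw [Polynomial.mem_roots (M.charpoly_monic.ne_zero)]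
  rw [spectrum.mem_iff] at hμ
  rw [Polynomial.IsRoot, eval_charpoly']
  by_contra hdet
  apply hμ
  apply (Matrix.isUnit_iff_isUnit_det _).mpr
  have : algebraMap ℂ (Matrix (Fin n) (Fin n) ℂ) μ = Matrix.scalar (Fin n) μ := by
    rw [Matrix.scalar_apply, Matrix.algebraMap_eq_diagonal]; rfl
  rw [this]
  exact isUnit_iff_ne_zero.mpr hdet

private lemma row_bound' {n t : ℕ} (ht1 : 1 ≤ t) (ht2 : t ≤ n) (c : Fin n → ℝ)
    (hc : ∀ j, c j = 0 ∨ c j = 1) (w : Fin n → ℝ) (α β : ℝ) (hαβ : α ≤ β) (hα : 0 ≤ α)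
    (hwa : ∀ j, α ≤ w j) (hwb : ∀ j : Fin n, (j : ℕ) < t → β ≤ w j)
    (m : ℝ) (hnt : (n : ℝ) - t ≤ m - 1) :
    (∑ j, c j) * β - (m - 1) * (β - α) ≤ ∑ j, c j * w j := by
  classical
  have hc0 : ∀ j, 0 ≤ c j := fun j => by rcases hc j with h | h <;> simp [h]
  have hc1 : ∀ j, c j ≤ 1 := fun j => by rcases hc j with h | h <;> simp [h]
  set P : Finset (Fin n) := Finset.univ.filter (fun j : Fin n => (j : ℕ) < t) with hP
  have hsplit : ∑ j, c j * w j
      = ∑ j ∈ P, c j * w j + ∑ j ∈ Pᶜ, c j * w j := by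
    rw [hP, Finset.compl_filter, Finset.sum_filter_add_sum_filter_not]
  have hsplitc : ∑ j, c j = ∑ j ∈ P, c j + ∑ j ∈ Pᶜ, c j := by
    rw [hP, Finset.compl_filter, Finset.sum_filter_add_sum_filter_not]
  have h1 : ∑ j ∈ P, c j * β ≤ ∑ j ∈ P, c j * w j := by
    refine Finset.sum_le_sum fun j hj => ?_
    have : (j : ℕ) < t := by simpa [hP] using hj
    exact mul_le_mul_of_nonneg_left (hwb j this) (hc0 j)
  have h2 : ∑ j ∈ Pᶜ, c j * α ≤ ∑ j ∈ Pᶜ, c j * w j := by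
    refine Finset.sum_le_sum fun j hj => mul_le_mul_of_nonneg_left (hwa j) (hc0 j)
  have hcardP : P.card = t := by
    have : P = Finset.Iic (⟨t - 1, by omega⟩ : Fin n) := by
      ext j
      simp only [hP, Finset.mem_filter, Finset.mem_univ, true_and, Finset.mem_Iic, Fin.le_def]
      omega
    rw [this, Fin.card_Iic]
    simp only [Fin.val_mk]
    omega
  have hcardPc : (Pᶜ : Finset (Fin n)).card = n - t := by
    have := Finset.card_compl P
    simp [hcardP] at this
    omega
  have hS2le : ∑ j ∈ Pᶜ, c j ≤ (n : ℝ) - t := by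
    calc ∑ j ∈ Pᶜ, c j ≤ ∑ j ∈ Pᶜ, (1 : ℝ) := Finset.sum_le_sum fun j _ => hc1 j
      _ = ((n - t : ℕ) : ℝ) := by simp [hcardPc]
      _ = (n : ℝ) - t := by push_cast [Nat.cast_sub ht2]; ring
  have hS20 : 0 ≤ ∑ j ∈ Pᶜ, c j := Finset.sum_nonneg fun j _ => hc0 j
  have hS2m : ∑ j ∈ Pᶜ, c j ≤ m - 1 := le_trans hS2le hnt
  have hkey : (∑ j ∈ Pᶜ, c j) * (β - α) ≤ (m - 1) * (β - α) :=
    mul_le_mul_of_nonneg_right hS2m (by linarith)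
  have hsum1 : ∑ j ∈ P, c j * β = (∑ j ∈ P, c j) * β := by rw [Finset.sum_mul]
  have hsum2 : ∑ j ∈ Pᶜ, c j * α = (∑ j ∈ Pᶜ, c j) * α := by rw [Finset.sum_mul]
  nlinarith [h1, h2, hkey]

private lemma tendsto_aux' {B v1 : ℝ} (hB : 1 ≤ B) (hv : 1 ≤ v1) :
    Tendsto (fun k : ℕ => ENNReal.ofReal ((B ^ k / v1) ^ (1 / (k : ℝ)))) atTop
      (nhds (ENNReal.ofReal B)) := by
  have hB0 : (0:ℝ) < B := lt_of_lt_of_le one_pos hB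
  have hv0 : (0:ℝ) < v1 := lt_of_lt_of_le one_pos hv
  have hreal : Tendsto (fun k : ℕ => (B ^ k / v1) ^ (1 / (k : ℝ))) atTop (nhds B) := by
    have h1 : Tendsto (fun k : ℕ => Real.exp (Real.log B - Real.log v1 / k)) atTop
        (nhds B) := by
      have h2 : Tendsto (fun k : ℕ => Real.log B - Real.log v1 / k) atTop
          (nhds (Real.log B - 0)) :=
        tendsto_const_nhds.sub (tendsto_const_div_atTop_nhds_zero_nat _)
      have := (Real.continuous_exp.tendsto _).comp h2
      simpa [Function.comp_def, Real.exp_log hB0] using this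
    refine h1.congr' ?_
    filter_upwards [eventually_ge_atTop 1] with k hk
    have hk0 : (k:ℝ) ≠ 0 := by positivity
    have hx : (0:ℝ) < B ^ k / v1 := by positivity
    rw [Real.rpow_def_of_pos hx, Real.log_div (by positivity) (ne_of_gt hv0), Real.log_pow]
    congr 1
    field_simp
  exact (ENNReal.continuous_ofReal.tendsto _).comp hreal

private lemma one_le_rowsum {n : ℕ} (c : Fin n → ℝ) (hc : ∀ j, c j = 0 ∨ c j = 1)
    (h : 0 < ∑ j, c j) : 1 ≤ ∑ j, c j := by
  have hex : ∃ j, c j = 1 := by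
    by_contra hno
    push_neg at hno
    have hz : ∀ j, c j = 0 := fun j => (hc j).resolve_right (hno j)
    simp [hz] at h
  obtain ⟨j0, hj0⟩ := hex
  calc (1 : ℝ) = c j0 := hj0.symm
    _ ≤ ∑ j, c j := Finset.single_le_sum (fun j _ => by rcases hc j with h | h <;> simp [h])
        (Finset.mem_univ j0)

set_option maxHeartbeats 1600000

theorem stmt_19 {n : ℕ} (hn : 0 < n) (C : Matrix (Fin n) (Fin n) ℝ)
    (h01 : ∀ i j, C i j = 0 ∨ C i j = 1)
    (r : Fin n → ℝ) (hrdef : ∀ i, r i = ∑ j, C i j)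
    (hsorted : ∀ i j : Fin n, i ≤ j → r j ≤ r i)
    (hrn : 0 < r ⟨n - 1, by omega⟩)
    (t : ℕ) (ht1 : 1 ≤ t) (ht2 : t ≤ n)
    (hta : (n : ℝ) - r ⟨n - 1, by omega⟩ + 1 ≤ (t : ℝ)) :
    (r ⟨t - 1, by omega⟩ +
      Real.sqrt ((r ⟨t - 1, by omega⟩) ^ 2 -
        4 * (r ⟨n - 1, by omega⟩ - 1) * (r ⟨t - 1, by omega⟩ - r ⟨n - 1, by omega⟩))) / 2
      ≤ specRad C ∧
    r ⟨n - 1, by omega⟩ ≤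
      (r ⟨t - 1, by omega⟩ +
        Real.sqrt ((r ⟨t - 1, by omega⟩) ^ 2 -
          4 * (r ⟨n - 1, by omega⟩ - 1) * (r ⟨t - 1, by omega⟩ - r ⟨n - 1, by omega⟩))) / 2 ∧
    ((r ⟨t - 1, by omega⟩ +
        Real.sqrt ((r ⟨t - 1, by omega⟩) ^ 2 -
          4 * (r ⟨n - 1, by omega⟩ - 1) * (r ⟨t - 1, by omega⟩ - r ⟨n - 1, by omega⟩))) / 2
        = r ⟨n - 1, by omega⟩ ↔ r ⟨t - 1, by omega⟩ = r ⟨n - 1, by omega⟩) := by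
  classical
  set a : ℝ := r ⟨t - 1, by omega⟩ with ha
  set m : ℝ := r ⟨n - 1, by omega⟩ with hm
  set D : ℝ := a ^ 2 - 4 * (m - 1) * (a - m) with hD
  set s : ℝ := Real.sqrt D with hsdef
  -- basic facts
  have ham : m ≤ a := hsorted ⟨t - 1, by omega⟩ ⟨n - 1, by omega⟩ (by
    simp only [Fin.le_def]; omega)
  have hm1 : (1 : ℝ) ≤ m := by
    have hrn' : 0 < ∑ j, C ⟨n - 1, by omega⟩ j := by rw [← hrdef, ← hm]; exact hrn
    rw [hm, hrdef]
    exact one_le_rowsum _ (h01 _) hrn'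
  have hDnn : 0 ≤ D := by nlinarith [sq_nonneg (a - 2 * m)]
  have hs0 : 0 ≤ s := Real.sqrt_nonneg _
  have hs2 : s ^ 2 = D := Real.sq_sqrt hDnn
  set B : ℝ := (a + s) / 2 with hBdef
  have hBm : m ≤ B := by
    rw [hBdef]
    rcases le_or_gt (2 * m - a) 0 with h | h
    · linarith
    · nlinarith [hs2, hs0]
  have hB1 : (1 : ℝ) ≤ B := le_trans hm1 hBm
  have hBq : B ^ 2 - a * B + (m - 1) * (a - m) = 0 := by
    rw [hBdef]; nlinarith [hs2]
  -- part 3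
  have hiff : B = m ↔ a = m := by
    rw [hBdef]
    constructor
    · intro h
      have hsm : s = 2 * m - a := by linarith
      have : s ^ 2 = (2 * m - a) ^ 2 := by rw [hsm]
      rw [hs2, hD] at this
      nlinarith [this]
    · intro h
      have : D = a ^ 2 := by rw [hD, h]; ring
      have hsa : s = a := by
        rw [hsdef, this]
        exact Real.sqrt_sq (by linarith)
      rw [hsa, h]; ring
  -- part 1 : the spectral radius bound
  set v1 : ℝ := B - m + 1 with hv1def
  have hv1 : (1 : ℝ) ≤ v1 := by rw [hv1def]; linarith
  have hv1pos : (0 : ℝ) < v1 := lt_of_lt_of_le one_pos hv1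
  have hv1B : v1 + m - 1 = B := by rw [hv1def]; ring
  clear_value a m D s B v1
  have hr_ge_m : ∀ i : Fin n, m ≤ r i := fun i => by
    rw [hm]
    exact hsorted i ⟨n - 1, by omega⟩ (by simp only [Fin.le_def]; omega)
  have hr_ge_a : ∀ i : Fin n, (i : ℕ) < t → a ≤ r i := fun i hi => by
    rw [ha]
    exact hsorted i ⟨t - 1, by omega⟩ (by simp only [Fin.le_def]; omega)
  have hnt : (n : ℝ) - t ≤ m - 1 := by rw [hm]; linarith [hta]
  -- the weight sequence
  set w : ℕ → Fin n → ℝ := fun k i => ∑ j, (C ^ k) i j with hw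
  clear_value w
  have hw0 : ∀ i, w 0 i = 1 := by
    intro i
    simp [hw, Matrix.one_apply, Finset.sum_ite_eq]
  have hwsucc : ∀ k i, w (k + 1) i = ∑ j, C i j * w k j := by
    intro k i
    simp only [hw, pow_succ']
    simp_rw [Matrix.mul_apply]
    rw [Finset.sum_comm]
    simp_rw [← Finset.mul_sum]
  -- the key induction
  have hind : ∀ k : ℕ, (∀ i, B ^ k ≤ v1 * w k i) ∧
      (∀ i : Fin n, (i : ℕ) < t → B ^ k ≤ w k i) := by
    intro k
    induction k with
    | zero =>
      constructor
      · intro i; rw [hw0]; simpa using hv1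
      · intro i _; rw [hw0]; simp
    | succ k ih =>
      obtain ⟨ihA, ihB⟩ := ih
      have hβpos : (0 : ℝ) < B ^ k := pow_pos (by linarith) k
      set β : ℝ := B ^ k with hβ
      have hsucc : B ^ (k + 1) = B * β := by rw [hβ, pow_succ]; ring
      set αk : ℝ := β / v1 with hαk
      have hval : v1 * αk = β := by rw [hαk]; field_simp
      have hαpos : 0 < αk := by rw [hαk]; positivity
      have hαβ : αk ≤ β := by
        rw [hαk]
        exact div_le_self hβpos.le hv1
      clear_value β
      clear_value αk
      have hwa : ∀ j, αk ≤ w k j := by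
        intro j
        rw [hαk, div_le_iff₀ hv1pos]
        calc β ≤ v1 * w k j := ihA j
          _ = w k j * v1 := by ring
      have t1 : ∀ i, r i * β - (m - 1) * (β - αk) ≤ w (k + 1) i := by
        intro i
        rw [hwsucc, hrdef]
        exact row_bound' ht1 ht2 (fun j => C i j) (fun j => h01 i j) (w k) αk β hαβ
          hαpos.le hwa ihB m hnt
      constructor
      · intro i
        have hrm := hr_ge_m i
        have e2 : (m * β - (m - 1) * (β - αk)) * v1 = B * β := by
          linear_combination (m - 1) * hval + β * hv1B
        have hstep : m * β - (m - 1) * (β - αk) ≤ r i * β - (m - 1) * (β - αk) := by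
          nlinarith [mul_le_mul_of_nonneg_right hrm hβpos.le]
        have : B * β ≤ w (k + 1) i * v1 := by
          rw [← e2]
          exact mul_le_mul_of_nonneg_right (le_trans hstep (t1 i)) hv1pos.le
        calc B ^ (k + 1) = B * β := hsucc
          _ ≤ w (k + 1) i * v1 := this
          _ = v1 * w (k + 1) i := by ring
      · intro i hi
        have hra := hr_ge_a i hi
        have h3 : a * v1 - (m - 1) * (v1 - 1) - B * v1 = 0 := by
          rw [hv1def]; linarith [hBq, hv1def]
        have e1 : (a * β - (m - 1) * (β - αk)) * v1 = (B * β) * v1 := by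
          linear_combination β * h3 + (m - 1) * hval
        have hstep : a * β - (m - 1) * (β - αk) ≤ r i * β - (m - 1) * (β - αk) := by
          nlinarith [mul_le_mul_of_nonneg_right hra hβpos.le]
        have hmul : (B * β) * v1 ≤ w (k + 1) i * v1 := by
          rw [← e1]
          exact mul_le_mul_of_nonneg_right (le_trans hstep (t1 i)) hv1pos.le
        have : B * β ≤ w (k + 1) i := le_of_mul_le_mul_right hmul hv1pos
        calc B ^ (k + 1) = B * β := hsucc
          _ ≤ w (k + 1) i := this
  -- lower bound on norms of powers
  set Cc : Matrix (Fin n) (Fin n) ℂ := C.map (fun x => (x : ℂ)) with hCc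
  haveI : CompleteSpace (Matrix (Fin n) (Fin n) ℂ) := FiniteDimensional.complete ℂ _
  have hpow : ∀ k : ℕ, Cc ^ k = (C ^ k).map (fun x => (x : ℂ)) := by
    intro k
    have h1 : Cc = (Complex.ofRealHom : ℝ →+* ℂ).mapMatrix C := rfl
    have h2 : (C ^ k).map (fun x => (x : ℂ))
        = (Complex.ofRealHom : ℝ →+* ℂ).mapMatrix (C ^ k) := rfl
    rw [h1, h2, map_pow]
  set i0 : Fin n := ⟨0, hn⟩ with hi0
  have hnorm : ∀ k : ℕ, B ^ k / v1 ≤ ‖Cc ^ k‖ := by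
    intro k
    have hrow : ∑ j, ‖(Cc ^ k) i0 j‖ ≤ ‖Cc ^ k‖ := by
      rw [Matrix.linfty_opNorm_def]
      have h : (∑ j, ‖(Cc ^ k) i0 j‖₊ : ℝ≥0)
          ≤ Finset.univ.sup fun i => ∑ j, ‖(Cc ^ k) i j‖₊ :=
        Finset.le_sup (f := fun i => ∑ j, ‖(Cc ^ k) i j‖₊) (Finset.mem_univ i0)
      calc ∑ j, ‖(Cc ^ k) i0 j‖ = ((∑ j, ‖(Cc ^ k) i0 j‖₊ : ℝ≥0) : ℝ) := by push_cast; rfl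
        _ ≤ _ := by exact_mod_cast h
    have hentry : ∀ j, (C ^ k) i0 j ≤ ‖(Cc ^ k) i0 j‖ := by
      intro j
      rw [hpow]
      simp only [Matrix.map_apply, Complex.norm_real]
      exact le_abs_self _
    have hsum : w k i0 ≤ ∑ j, ‖(Cc ^ k) i0 j‖ := by
      rw [hw]
      exact Finset.sum_le_sum fun j _ => hentry j
    have hBk : B ^ k / v1 ≤ w k i0 := by
      rw [div_le_iff₀ hv1pos]
      calc B ^ k ≤ v1 * w k i0 := (hind k).1 i0
        _ = w k i0 * v1 := by ring
    linarith
  -- Gelfand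
  have hF : Tendsto (fun k : ℕ => (‖Cc ^ k‖₊ : ℝ≥0∞) ^ (1 / (k : ℝ))) atTop
      (nhds (spectralRadius ℂ Cc)) :=
    spectrum.pow_nnnorm_pow_one_div_tendsto_nhds_spectralRadius Cc
  have hG := tendsto_aux' hB1 hv1
  have hGF : ∀ᶠ k : ℕ in atTop,
      ENNReal.ofReal ((B ^ k / v1) ^ (1 / (k : ℝ)))
        ≤ (‖Cc ^ k‖₊ : ℝ≥0∞) ^ (1 / (k : ℝ)) := by
    filter_upwards [eventually_ge_atTop 1] with k hk
    have hx0 : (0 : ℝ) ≤ B ^ k / v1 := by positivity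
    have he : (0 : ℝ) ≤ 1 / (k : ℝ) := by positivity
    rw [← ENNReal.ofReal_rpow_of_nonneg hx0 he]
    refine ENNReal.rpow_le_rpow ?_ he
    rw [← enorm_eq_nnnorm, ← ofReal_norm]
    exact ENNReal.ofReal_le_ofReal (hnorm k)
  have hBsr : ENNReal.ofReal B ≤ spectralRadius ℂ Cc :=
    le_of_tendsto_of_tendsto hG hF hGF
  -- spectral radius is at most specRad
  have hsrle : spectralRadius ℂ Cc ≤ ENNReal.ofReal (specRad C) := by
    rw [spectralRadius]
    refine iSup₂_le fun μ hμ => ?_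
    have hroot : μ ∈ Cc.charpoly.roots := root_of_mem_spectrum' Cc hμ
    have habs : ‖μ‖ ≤ specRad C := by
      apply le_foldr_max'
      exact Multiset.mem_map_of_mem _ hroot
    calc (‖μ‖₊ : ℝ≥0∞) = ENNReal.ofReal ‖μ‖ := by
          rw [← enorm_eq_nnnorm, ← ofReal_norm]
      _ ≤ ENNReal.ofReal (specRad C) := ENNReal.ofReal_le_ofReal habs
  have hfinal : B ≤ specRad C := by
    have h := le_trans hBsr hsrle
    have hspec0 : 0 ≤ specRad C := foldr_max_nonneg' _
    exact (ENNReal.ofReal_le_ofReal_iff hspec0).mp h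
  exact ⟨hfinal, hBm, hiff⟩
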